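/- arXiv:1506.02578 — 2 statements merged into one kernel-verified Lean document; each statement's English description precedes it below -/
import Mathlib

section
/- The function h(x) = sign(x)·( (1/√2)·arcsin( (3(1−√(1−x²))−2)/(√(1−x²)+1) ) + π/2^{3/2} ) satisfies |h'(x)| = ((1−x²)² + (1−x²)^{3/2})^{−1/2} for all x ∈ (−1,1). -/
open Real

noncomputable def h (x : ℝ) : ℝ :=
  Real.sign x * ((1 / Real.sqrt 2) *
      Real.arcsin ((3 * (1 - Real.sqrt (1 - x ^ 2)) - 2) / (Real.sqrt (1 - x ^ 2) + 1))
    + Real.pi / (2 : ℝ) ^ ((3 : ℝ) / 2))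

noncomputable def S (y : ℝ) : ℝ := Real.sqrt (1 - y ^ 2)
noncomputable def g (y : ℝ) : ℝ := (3 * (1 - Real.sqrt (1 - y ^ 2)) - 2) / (Real.sqrt (1 - y ^ 2) + 1)
noncomputable def f (y : ℝ) : ℝ :=
  (1 / Real.sqrt 2) * Real.arcsin (g y) + Real.pi / (2 : ℝ) ^ ((3 : ℝ) / 2)

lemma S_pos {y : ℝ} (hy : y ∈ Set.Ioo (-1 : ℝ) 1) : 0 < S y := by
  apply Real.sqrt_pos.2; nlinarith [hy.1, hy.2]

lemma S_sq {y : ℝ} (hy : y ∈ Set.Ioo (-1 : ℝ) 1) : S y ^ 2 = 1 - y ^ 2 := by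
  apply Real.sq_sqrt; nlinarith [hy.1, hy.2]

lemma S_le_one {y : ℝ} (hy : y ∈ Set.Ioo (-1 : ℝ) 1) : S y ≤ 1 :=
  Real.sqrt_le_one.2 (by nlinarith [hy.1, hy.2])

lemma g_eq {y : ℝ} : g y = (1 - 3 * S y) / (S y + 1) := by
  rw [g, S]; ring_nf

lemma one_sub_g_sq {y : ℝ} (hy : y ∈ Set.Ioo (-1 : ℝ) 1) :
    1 - g y ^ 2 = 8 * S y * y ^ 2 / (S y + 1) ^ 3 := by
  have hs := S_pos hy
  have hsq := S_sq hy
  rw [g_eq]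
  have h1 : S y + 1 ≠ 0 := by positivity
  field_simp
  linear_combination (-(8 * S y)) * hsq

lemma hasDerivAt_S {y : ℝ} (hy : y ∈ Set.Ioo (-1 : ℝ) 1) :
    HasDerivAt S (-y / S y) y := by
  have h1 : (1 : ℝ) - y ^ 2 ≠ 0 := by nlinarith [hy.1, hy.2]
  have h2 : HasDerivAt (fun z : ℝ => 1 - z ^ 2) (-(2 * y)) y := by
    simpa using ((hasDerivAt_pow 2 y).const_sub 1)
  have := (Real.hasDerivAt_sqrt h1).comp y h2
  refine this.congr_deriv ?_
  have hs := S_pos hy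
  rw [S] at hs ⊢
  field_simp

lemma hasDerivAt_g {y : ℝ} (hy : y ∈ Set.Ioo (-1 : ℝ) 1) :
    HasDerivAt g (4 * y / (S y * (S y + 1) ^ 2)) y := by
  have hs := S_pos hy
  have h1 : S y + 1 ≠ 0 := by positivity
  have hS := hasDerivAt_S hy
  have hnum : HasDerivAt (fun z => 1 - 3 * S z) (-3 * (-y / S y)) y := by
    simpa using ((hS.const_mul 3).const_sub 1)
  have hden : HasDerivAt (fun z => S z + 1) (-y / S y) y := hS.add_const 1
  have := hnum.div hden h1
  have hgg : g = fun z => (1 - 3 * S z) / (S z + 1) := funext fun z => g_eq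
  rw [hgg]
  refine this.congr_deriv ?_
  field_simp
  ring

lemma g_mem {y : ℝ} (hy : y ∈ Set.Ioo (-1 : ℝ) 1) (hy0 : y ≠ 0) :
    g y ≠ -1 ∧ g y ≠ 1 := by
  have hs := S_pos hy
  have h1 : (0:ℝ) < (S y + 1) ^ 3 := by positivity
  have h2 : 0 < 1 - g y ^ 2 := by
    rw [one_sub_g_sq hy]
    have : 0 < y ^ 2 := by positivity
    positivity
  constructor <;> intro hgy <;> rw [hgy] at h2 <;> norm_num at h2

lemma hasDerivAt_f {y : ℝ} (hy : y ∈ Set.Ioo (-1 : ℝ) 1) (hy0 : y ≠ 0) :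
    HasDerivAt f ((1 / Real.sqrt 2) * ((1 / Real.sqrt (1 - g y ^ 2)) *
      (4 * y / (S y * (S y + 1) ^ 2)))) y := by
  obtain ⟨hg1, hg2⟩ := g_mem hy hy0
  have harc := (Real.hasDerivAt_arcsin hg1 hg2).comp y (hasDerivAt_g hy)
  have : HasDerivAt (fun z => (1 / Real.sqrt 2) * Real.arcsin (g z))
      ((1 / Real.sqrt 2) * (1 / Real.sqrt (1 - g y ^ 2) * (4 * y / (S y * (S y + 1) ^ 2)))) y :=
    harc.const_mul _
  exact this.add_const _

lemma rhs_eq {x : ℝ} (hx : x ∈ Set.Ioo (-1 : ℝ) 1) :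
    ((1 - x ^ 2) ^ 2 + (1 - x ^ 2) ^ ((3 : ℝ) / 2)) ^ (-(1 : ℝ) / 2)
      = (Real.sqrt (S x ^ 4 + S x ^ 3))⁻¹ := by
  have h0 : (0:ℝ) < 1 - x ^ 2 := by nlinarith [hx.1, hx.2]
  have h32 : (1 - x ^ 2) ^ ((3 : ℝ) / 2) = S x ^ 3 := by
    rw [S, Real.sqrt_eq_rpow, ← Real.rpow_natCast ((1 - x ^ 2) ^ ((1:ℝ)/2)) 3,
      ← Real.rpow_mul h0.le]
    norm_num
  have h2 : (1 - x ^ 2) ^ 2 = S x ^ 4 := by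
    rw [← S_sq hx]; ring
  rw [h32, h2, neg_div, Real.rpow_neg (by nlinarith [S_pos hx]), Real.sqrt_eq_rpow]

lemma deriv_value {x : ℝ} (hx : x ∈ Set.Ioo (-1 : ℝ) 1) (hx0 : 0 < x) :
    (1 / Real.sqrt 2) * ((1 / Real.sqrt (1 - g x ^ 2)) * (4 * x / (S x * (S x + 1) ^ 2)))
      = ((1 - x ^ 2) ^ 2 + (1 - x ^ 2) ^ ((3 : ℝ) / 2)) ^ (-(1 : ℝ) / 2) := by
  have hs := S_pos hx
  have hg : 0 < 1 - g x ^ 2 := by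
    rw [one_sub_g_sq hx]; have : 0 < x ^ 2 := by positivity
    positivity
  rw [rhs_eq hx]
  set D : ℝ := (1 / Real.sqrt 2) * ((1 / Real.sqrt (1 - g x ^ 2)) * (4 * x / (S x * (S x + 1) ^ 2))) with hD
  have hSS : (0:ℝ) < S x ^ 4 + S x ^ 3 := by positivity
  have hDnn : 0 ≤ D := by
    apply mul_nonneg (by positivity)
    apply mul_nonneg (by positivity)
    apply div_nonneg (by linarith) (by positivity)
  have hsq : D ^ 2 = ((Real.sqrt (S x ^ 4 + S x ^ 3))⁻¹) ^ 2 := by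
    have e1 : D ^ 2 = (1 / 2) * ((1 / (1 - g x ^ 2)) * (16 * x ^ 2 / (S x ^ 2 * (S x + 1) ^ 4))) := by
      rw [hD]
      rw [mul_pow, mul_pow, div_pow, div_pow, div_pow, mul_pow,
        Real.sq_sqrt (by norm_num : (0:ℝ) ≤ 2), Real.sq_sqrt hg.le]
      ring
    have e2 : ((Real.sqrt (S x ^ 4 + S x ^ 3))⁻¹) ^ 2 = (S x ^ 4 + S x ^ 3)⁻¹ := by
      rw [inv_pow, Real.sq_sqrt hSS.le]
    rw [e1, e2, one_sub_g_sq hx]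
    have h1 : S x + 1 ≠ 0 := by positivity
    have hx2 : x ^ 2 ≠ 0 := by positivity
    field_simp
    ring
  calc D = Real.sqrt (D ^ 2) := (Real.sqrt_sq hDnn).symm
    _ = Real.sqrt (((Real.sqrt (S x ^ 4 + S x ^ 3))⁻¹) ^ 2) := by rw [hsq]
    _ = (Real.sqrt (S x ^ 4 + S x ^ 3))⁻¹ := Real.sqrt_sq (by positivity)

noncomputable def w (y : ℝ) : ℝ := 2 * Real.sqrt 2 * (Real.sqrt (S y) / Real.sqrt (S y + 1) ^ 3)
noncomputable def u (y : ℝ) : ℝ := y * w y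

lemma S_zero : S 0 = 1 := by simp [S]

lemma sqrt_two_cube : Real.sqrt 2 ^ 3 = 2 * Real.sqrt 2 := by
  rw [pow_succ, Real.sq_sqrt (by norm_num : (0:ℝ) ≤ 2)]

lemma w_zero : w 0 = 1 := by
  rw [w, S_zero, Real.sqrt_one, show (1:ℝ) + 1 = 2 by norm_num, sqrt_two_cube]
  have : Real.sqrt 2 ≠ 0 := by positivity
  field_simp

lemma continuous_S : Continuous S := Real.continuous_sqrt.comp (by continuity)

lemma w_contAt : ContinuousAt w 0 := by
  apply ContinuousAt.mul continuousAt_const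
  apply ContinuousAt.div
  · exact Real.continuous_sqrt.continuousAt.comp continuous_S.continuousAt
  · exact (Real.continuous_sqrt.continuousAt.comp
      (continuous_S.add continuous_const).continuousAt).pow 3
  · rw [S_zero]
    have : Real.sqrt (1 + 1) = Real.sqrt 2 := by norm_num
    rw [this, sqrt_two_cube]
    positivity

lemma hasDerivAt_u : HasDerivAt u 1 0 := by
  rw [hasDerivAt_iff_tendsto_slope]
  have hW : Filter.Tendsto w (nhdsWithin 0 {(0:ℝ)}ᶜ) (nhds 1) := by
    rw [← w_zero]
    exact w_contAt.tendsto.mono_left nhdsWithin_le_nhds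
  apply hW.congr'
  filter_upwards [self_mem_nhdsWithin] with y hy
  have hy0 : y ≠ 0 := hy
  rw [slope_def_field, u]
  simp [u, w_zero]
  field_simp

lemma S_even (y : ℝ) : S (-y) = S y := by simp [S]

lemma u_nonneg {y : ℝ} (hy0 : 0 ≤ y) : 0 ≤ u y := by
  apply mul_nonneg hy0
  rw [w]; positivity

lemma u_eq_sqrt {y : ℝ} (hy : y ∈ Set.Ioo (-1 : ℝ) 1) (hy0 : 0 ≤ y) :
    u y = Real.sqrt (1 - g y ^ 2) := by
  have hs := S_pos hy
  rw [← Real.sqrt_sq (u_nonneg hy0)]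
  congr 1
  rw [one_sub_g_sq hy, u, w]
  have e1 : Real.sqrt (S y) ^ 2 = S y := Real.sq_sqrt hs.le
  have e2 : (Real.sqrt (S y + 1) ^ 3) ^ 2 = (S y + 1) ^ 3 := by
    rw [← pow_mul, mul_comm 3 2, pow_mul, Real.sq_sqrt (by positivity)]
  have e3 : (2 * Real.sqrt 2) ^ 2 = 8 := by
    rw [mul_pow, Real.sq_sqrt (by norm_num : (0:ℝ) ≤ 2)]; norm_num
  rw [mul_pow, mul_pow, div_pow, e1, e2, e3]
  ring

lemma arcsin_sqrt_id {t : ℝ} (h1 : -1 ≤ t) (h2 : t ≤ 0) :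
    Real.arcsin (Real.sqrt (1 - t ^ 2)) = Real.arcsin t + Real.pi / 2 := by
  have ha1 : -(Real.pi / 2) ≤ Real.arcsin t := Real.neg_pi_div_two_le_arcsin t
  have ha2 : Real.arcsin t ≤ 0 := Real.arcsin_nonpos.2 h2
  have hpi := Real.pi_pos
  have e : Real.sqrt (1 - t ^ 2) = Real.sin (Real.arcsin t + Real.pi / 2) := by
    rw [Real.sin_add_pi_div_two, Real.cos_arcsin]
  rw [e, Real.arcsin_sin (by linarith) (by linarith)]

lemma two_rpow : (2 : ℝ) ^ ((3 : ℝ) / 2) = 2 * Real.sqrt 2 := by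
  rw [show (3:ℝ)/2 = 1 + (1:ℝ)/2 by norm_num, Real.rpow_add (by norm_num), Real.rpow_one,
    ← Real.sqrt_eq_rpow]

lemma S_third {y : ℝ} (hy : y ∈ Set.Ioo (-(1:ℝ)/2) (1/2)) : (1:ℝ)/3 ≤ S y := by
  rw [S, show (1:ℝ)/3 = Real.sqrt ((1:ℝ)/9) by
    rw [show (1:ℝ)/9 = ((1:ℝ)/3)^2 by norm_num, Real.sqrt_sq (by norm_num)]]
  apply Real.sqrt_le_sqrt
  nlinarith [hy.1, hy.2]

lemma sub_Ioo {y : ℝ} (hy : y ∈ Set.Ioo (-(1:ℝ)/2) (1/2)) : y ∈ Set.Ioo (-1:ℝ) 1 :=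
  ⟨by linarith [hy.1], by linarith [hy.2]⟩

lemma g_bounds {y : ℝ} (hy : y ∈ Set.Ioo (-(1:ℝ)/2) (1/2)) : -1 ≤ g y ∧ g y ≤ 0 := by
  have h3 := S_third hy
  have hle := S_le_one (sub_Ioo hy)
  have hpos : (0:ℝ) < S y + 1 := by linarith
  rw [g_eq]
  constructor
  · rw [le_div_iff₀ hpos]; linarith
  · apply div_nonpos_of_nonpos_of_nonneg <;> linarith

lemma h_eq_near {y : ℝ} (hy : y ∈ Set.Ioo (-(1:ℝ)/2) (1/2)) :
    h y = (1 / Real.sqrt 2) * Real.arcsin (u y) := by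
  have key : ∀ z, z ∈ Set.Ioo (-(1:ℝ)/2) (1/2) → 0 < z →
      h z = (1 / Real.sqrt 2) * Real.arcsin (u z) := by
    intro z hz hz0
    obtain ⟨hb1, hb2⟩ := g_bounds hz
    have hz' := sub_Ioo hz
    show Real.sign z * f z = _
    rw [Real.sign_of_pos hz0, one_mul, f, u_eq_sqrt hz' hz0.le,
      arcsin_sqrt_id hb1 hb2, two_rpow]
    have h2 : Real.sqrt 2 ≠ 0 := by positivity
    field_simp
  rcases lt_trichotomy y 0 with hneg | rfl | hpos
  · have hy' : -y ∈ Set.Ioo (-(1:ℝ)/2) (1/2) := ⟨by linarith [hy.2], by linarith [hy.1]⟩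
    have hk := key (-y) hy' (by linarith)
    have hhy : h (-y) = -h y := by
      show Real.sign (-y) * f (-y) = -(Real.sign y * f y)
      have hf : f (-y) = f y := by simp [f, g, neg_sq]
      rw [hf, Real.sign_of_neg hneg, Real.sign_of_pos (by linarith : (0:ℝ) < -y)]
      ring
    have huy : u (-y) = -u y := by
      have : w (-y) = w y := by rw [w, w, S_even]
      rw [u, u, this]; ring
    rw [hhy, huy, Real.arcsin_neg] at hk
    linarith [hk]
  · show Real.sign 0 * f 0 = _
    rw [Real.sign_zero, zero_mul]
    have : u 0 = 0 := by rw [u]; ring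
    rw [this, Real.arcsin_zero, mul_zero]
  · exact key y hy hpos

lemma deriv_h_pos {x : ℝ} (hx : x ∈ Set.Ioo (-1:ℝ) 1) (hx0 : 0 < x) :
    deriv h x = ((1 - x ^ 2) ^ 2 + (1 - x ^ 2) ^ ((3 : ℝ) / 2)) ^ (-(1 : ℝ) / 2) := by
  have hev : h =ᶠ[nhds x] f := by
    filter_upwards [Ioi_mem_nhds hx0] with y hy
    show Real.sign y * f y = f y
    rw [Real.sign_of_pos hy, one_mul]
  rw [hev.deriv_eq, (hasDerivAt_f hx (ne_of_gt hx0)).deriv]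
  exact deriv_value hx hx0

theorem stmt0 (x : ℝ) (hx : x ∈ Set.Ioo (-1 : ℝ) 1) :
    |deriv h x| = ((1 - x ^ 2) ^ 2 + (1 - x ^ 2) ^ ((3 : ℝ) / 2)) ^ (-(1 : ℝ) / 2) := by
  rcases lt_trichotomy x 0 with hneg | rfl | hpos
  · have hx' : -x ∈ Set.Ioo (-1:ℝ) 1 := ⟨by linarith [hx.2], by linarith [hx.1]⟩
    have hs := S_pos hx
    have hg : 0 < 1 - g x ^ 2 := by
      rw [one_sub_g_sq hx]
      have hx2 : 0 < x ^ 2 := by nlinarith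
      positivity
    have hev : h =ᶠ[nhds x] fun y => -f y := by
      filter_upwards [Iio_mem_nhds hneg] with y hy
      show Real.sign y * f y = -f y
      rw [Real.sign_of_neg hy]; ring
    rw [hev.deriv_eq, HasDerivAt.deriv (f := fun y => -f y) ((hasDerivAt_f hx (ne_of_lt hneg)).neg), abs_neg]
    have key := deriv_value hx' (by linarith : (0:ℝ) < -x)
    have hge : g (-x) = g x := by simp [g, neg_sq]
    rw [hge, S_even] at key
    simp only [neg_sq] at key
    have hDneg : (1 / Real.sqrt 2) * ((1 / Real.sqrt (1 - g x ^ 2)) *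
        (4 * x / (S x * (S x + 1) ^ 2))) ≤ 0 := by
      have h1 : 4 * x / (S x * (S x + 1) ^ 2) ≤ 0 :=
        div_nonpos_of_nonpos_of_nonneg (by linarith) (by positivity)
      have h2 : (0:ℝ) ≤ 1 / Real.sqrt (1 - g x ^ 2) := by positivity
      have h3 : (0:ℝ) ≤ 1 / Real.sqrt 2 := by positivity
      exact mul_nonpos_of_nonneg_of_nonpos h3 (mul_nonpos_of_nonneg_of_nonpos h2 h1)
    rw [abs_of_nonpos hDneg, ← key]
    ring
  · have hx0 : (0:ℝ) ∈ Set.Ioo (-1:ℝ) 1 := by constructor <;> norm_num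
    have hev : h =ᶠ[nhds 0] fun y => (1 / Real.sqrt 2) * Real.arcsin (u y) := by
      filter_upwards [Ioo_mem_nhds (by norm_num : -(1:ℝ)/2 < 0) (by norm_num : (0:ℝ) < 1/2)]
        with y hy
      exact h_eq_near hy
    have hu0 : u 0 = 0 := by rw [u]; ring
    have harc : HasDerivAt Real.arcsin 1 (u 0) := by
      rw [hu0]
      have := Real.hasDerivAt_arcsin (by norm_num : (0:ℝ) ≠ -1) (by norm_num : (0:ℝ) ≠ 1)
      simpa using this
    have hd : HasDerivAt (fun y => (1 / Real.sqrt 2) * Real.arcsin (u y))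
        ((1 / Real.sqrt 2) * (1 * 1)) 0 := (harc.comp 0 hasDerivAt_u).const_mul _
    rw [hev.deriv_eq, hd.deriv, rhs_eq hx0, S_zero]
    rw [show (1:ℝ)^4 + (1:ℝ)^3 = 2 by norm_num]
    rw [abs_of_nonneg (by positivity), one_div, mul_one, mul_one]
  · rw [deriv_h_pos hx hpos]
    rw [abs_of_nonneg]
    rw [rhs_eq hx]
    have hs := S_pos hx
    positivity
end

section
/- Let F₀ be a bivariate elliptical distribution with center 0, equal marginal scales, and generalized correlation coefficient ρ. The spatial sign correlation functional γ applied to S(F₀,0) = [[1/2, δ],[δ, 1/2]] with δ = (1−√(1−ρ²))/(2ρ) (δ=0 for ρ=0) recovers ρ: explicitly, with s₁₁ = 1/2, s₁₂ = δ, d = 1/2 + √((s₁₁−1/2)² + s₁₂²) = 1/2 + |δ|, b = d − s₁₁, c = (2d−1)/(d(1−d)), one has c·s₁₂·b/√((s₁₂² + b²)² + (s₁₂·c·b)²) = ρ. -/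
theorem stmt15 (ρ : ℝ) (hρ : ρ ∈ Set.Ioo (-1 : ℝ) 1) :
    let δ := if ρ = 0 then (0 : ℝ) else (1 - Real.sqrt (1 - ρ ^ 2)) / (2 * ρ)
    let s₁₁ : ℝ := 1 / 2
    let s₁₂ := δ
    let d := 1 / 2 + Real.sqrt ((s₁₁ - 1 / 2) ^ 2 + s₁₂ ^ 2)
    let b := d - s₁₁
    let c := (2 * d - 1) / (d * (1 - d))
    c * s₁₂ * b / Real.sqrt ((s₁₂ ^ 2 + b ^ 2) ^ 2 + (s₁₂ * c * b) ^ 2) = ρ := by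
  intro δ s₁₁ s₁₂ d b c
  have hδdef : δ = if ρ = 0 then (0 : ℝ) else (1 - Real.sqrt (1 - ρ ^ 2)) / (2 * ρ) := rfl
  have hs11 : s₁₁ = 1 / 2 := rfl
  have hs12 : s₁₂ = δ := rfl
  have hddef : d = 1 / 2 + Real.sqrt ((s₁₁ - 1 / 2) ^ 2 + s₁₂ ^ 2) := rfl
  have hbdef : b = d - s₁₁ := rfl
  have hcdef : c = (2 * d - 1) / (d * (1 - d)) := rfl
  clear_value δ s₁₁ s₁₂ d b c
  subst hs11
  rw [hs12] at hddef ⊢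
  clear hs12
  obtain ⟨h1, h2⟩ := hρ
  by_cases h0 : ρ = 0
  · subst h0
    have hδ : δ = 0 := by rw [hδdef]; simp
    rw [hδ]
    simp
  · -- main case
    have hρ2 : 0 < 1 - ρ ^ 2 := by nlinarith
    set t := Real.sqrt (1 - ρ ^ 2) with htdef
    have ht2 : t ^ 2 = 1 - ρ ^ 2 := Real.sq_sqrt hρ2.le
    have htpos : 0 < t := Real.sqrt_pos.mpr hρ2
    have hρ2pos : 0 < ρ ^ 2 := sq_pos_of_ne_zero h0
    have htlt1 : t < 1 := by nlinarith [sq_nonneg (t - 1)]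
    clear_value t
    clear htdef
    have hδ : δ = (1 - t) / (2 * ρ) := by rw [hδdef, if_neg h0]
    clear hδdef
    have hδne : δ ≠ 0 := by
      rw [hδ]
      exact div_ne_zero (by linarith) (by simpa using h0)
    have hδ2pos : 0 < δ ^ 2 := sq_pos_of_ne_zero hδne
    have hkey : 4 * (1 + t) * δ ^ 2 = 1 - t := by
      rw [hδ]
      field_simp
      nlinarith [ht2]
    have h2ρδ : 2 * ρ * δ = 1 - t := by
      rw [hδ]; field_simp
    clear hδ
    -- |δ| facts
    have ha2 : |δ| ^ 2 = δ ^ 2 := sq_abs δ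
    have hapos : 0 < |δ| := abs_pos.mpr hδne
    have halt : |δ| < 1 / 2 := by nlinarith [ha2, hkey]
    -- b and d
    have hd : d = 1 / 2 + |δ| := by
      rw [hddef]
      have h : ((1:ℝ) / 2 - 1 / 2) ^ 2 + δ ^ 2 = δ ^ 2 := by ring
      rw [h, Real.sqrt_sq_eq_abs]
    have hb : b = |δ| := by rw [hbdef, hd]; ring
    clear hddef hbdef
    have hdd : d * (1 - d) = 1 / 4 - δ ^ 2 := by
      rw [hd]; nlinarith [ha2]
    have hddpos : 0 < 1 / 4 - δ ^ 2 := by nlinarith [ha2]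
    have hc : c = 2 * |δ| / (1 / 4 - δ ^ 2) := by
      rw [hcdef, hdd, hd]; ring_nf
    clear hcdef hdd
    have hfrac : 1 / 4 - δ ^ 2 = t / (2 * (1 + t)) := by
      field_simp
      nlinarith [hkey]
    have hE : (δ ^ 2 + b ^ 2) ^ 2 + (δ * c * b) ^ 2 = (2 * δ ^ 2 / t) ^ 2 := by
      rw [hb, hc, hfrac]
      field_simp
      linear_combination (16*δ^2*(1+t)^2*(|δ|^2+δ^2) + t^2*(|δ|^2+3*δ^2)) * ha2 + (4*δ^4*(1+t)) * hkey
    rw [hE, Real.sqrt_sq (by positivity)]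
    rw [hb, hc, hfrac]
    field_simp
    linear_combination (4*(1+t)*δ + 2*(1+t)*(1-2*δ)) * ha2 + (δ + (1-2*δ)/2) * hkey - (δ + (1-2*δ)/2) * h2ρδ
end
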